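/- arXiv:1708.01209 — 2 statements merged into one kernel-verified Lean document; each statement's English description precedes it below -/
import Mathlib

section
/- For every complex z with 0 < Re z < 1, the functional equation π^{-z/2}/(2 - 2^z) · Γ(1 - z/2) · G(z) = π^{-(1-z)/2}/(2 - 2^{1-z}) · Γ(1 - (1-z)/2) · G(1-z) holds (all factors being finite and the denominators 2 - 2^z and 2 - 2^{1-z} nonzero on this strip). -/
open MeasureTheory

open Complex Real Set Filter Asymptotics

/-- `G z = ∫₀^∞ ξ^(z-1) / (exp ξ + 1) dξ`. -/
noncomputable def G (z : ℂ) : ℂ :=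
  ∫ ξ in Set.Ioi (0 : ℝ), (ξ : ℂ) ^ (z - 1) / (Real.exp ξ + 1)

noncomputable def Gfun : ℝ → ℂ := fun t => 1 / ((Real.exp t : ℂ) + 1)

lemma G_eq_mellin (z : ℂ) : G z = mellin Gfun z := by
  simp [G, mellin, Gfun, smul_eq_mul, div_eq_mul_inv]

lemma Gfun_cont : Continuous Gfun := by
  apply continuous_const.div
  · fun_prop
  · intro t hc
    have h := Real.exp_pos t
    have e : (Real.exp t + 1 : ℝ) = 0 := by exact_mod_cast hc
    linarith

lemma Gfun_norm (t : ℝ) : ‖Gfun t‖ = 1 / (Real.exp t + 1) := by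
  have h : (0:ℝ) < Real.exp t + 1 := by positivity
  have e : ((Real.exp t : ℂ) + 1) = ((Real.exp t + 1 : ℝ) : ℂ) := by push_cast; ring
  rw [Gfun, e, norm_div, norm_one, Complex.norm_real, Real.norm_eq_abs, abs_of_pos h]

lemma G_diff {s : ℂ} (hs : 0 < s.re) : DifferentiableAt ℂ (mellin Gfun) s := by
  refine mellin_differentiableAt_of_isBigO_rpow_exp one_pos
    (Gfun_cont.locallyIntegrable.locallyIntegrableOn _) ?_ ?_ (b := 0) hs
  · refine isBigO_of_le _ fun t => ?_
    rw [Gfun_norm, Real.norm_eq_abs, abs_of_pos (Real.exp_pos _), neg_one_mul, Real.exp_neg]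
    rw [div_le_iff₀ (by positivity)]
    rw [inv_mul_eq_div, le_div_iff₀ (Real.exp_pos _), one_mul]
    linarith [Real.exp_pos t]
  · refine isBigO_of_le _ fun t => ?_
    rw [Gfun_norm]
    have h1 : (1:ℝ) ≤ Real.exp t + 1 := by linarith [Real.exp_pos t]
    have : ‖t ^ (-(0:ℝ))‖ = 1 := by simp
    rw [this, div_le_one (by positivity)]
    exact h1

lemma expand (t : ℝ) (ht : t ∈ Ioi (0:ℝ)) :
    HasSum (fun n : ℕ => (-1 : ℂ)^n * Real.exp (-((n:ℝ)+1) * t)) (1 / ((Real.exp t : ℂ) + 1)) := by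
  have ht' : (0:ℝ) < t := ht
  have hlt : ‖(-(Real.exp (-t)) : ℂ)‖ < 1 := by
    rw [norm_neg, Complex.norm_real, Real.norm_eq_abs, abs_of_pos (Real.exp_pos _)]
    exact Real.exp_lt_one_iff.mpr (by linarith)
  have h2 := (hasSum_geometric_of_norm_lt_one hlt).mul_right ((Real.exp (-t) : ℂ))
  have hprod : ((Real.exp (-t) : ℂ)) * ((Real.exp t : ℂ)) = 1 := by
    rw [← Complex.ofReal_mul, ← Real.exp_add]
    norm_num
  have hden1 : ((Real.exp t : ℂ)) + 1 ≠ 0 := by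
    intro hc
    have : (Real.exp t + 1 : ℝ) = 0 := by exact_mod_cast hc
    linarith [Real.exp_pos t]
  have hden2 : (1:ℂ) - -((Real.exp (-t) : ℂ)) ≠ 0 := by
    rw [sub_neg_eq_add]
    intro hc
    have : (1 + Real.exp (-t) : ℝ) = 0 := by exact_mod_cast hc
    linarith [Real.exp_pos (-t)]
  have hfun : (fun n : ℕ => (-1:ℂ)^n * Real.exp (-((n:ℝ)+1)*t))
      = fun n => (-(Real.exp (-t) : ℂ))^n * (Real.exp (-t) : ℂ) := by
    funext n
    conv_rhs => rw [neg_pow]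
    rw [mul_assoc]
    congr 1
    rw [← Complex.ofReal_pow, ← Complex.ofReal_mul, Complex.ofReal_inj,
      ← Real.exp_nat_mul, ← Real.exp_add]
    congr 1
    push_cast
    ring
  have hval : ((1:ℂ) - -((Real.exp (-t) : ℂ)))⁻¹ * (Real.exp (-t) : ℂ)
      = 1 / ((Real.exp t : ℂ) + 1) := by
    rw [inv_mul_eq_div, div_eq_div_iff hden2 hden1]
    linear_combination hprod
  rw [hfun, ← hval]
  exact h2


lemma mellin_hasSum {s : ℂ} (hs : 1 < s.re) :
    HasSum (fun n : ℕ => Complex.Gamma s * (-1)^n / (((n:ℝ)+1 : ℝ) : ℂ) ^ s) (mellin Gfun s) := by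
  refine hasSum_mellin (a := fun n : ℕ => (-1:ℂ)^n) (p := fun n => (n:ℝ)+1)
    (fun n => Or.inr (by positivity)) (by linarith) (fun t ht => expand t ht) ?_
  have h0 : Summable (fun n : ℕ => ((n:ℝ))^(-s.re)) :=
    (Real.summable_nat_rpow (p := -s.re)).mpr (by linarith)
  have h1 : Summable (fun n : ℕ => ((n:ℝ)+1)^(-s.re)) := by
    have := (summable_nat_add_iff (f := fun n : ℕ => ((n:ℝ))^(-s.re)) 1).mpr h0
    exact this.congr (fun n => by push_cast; ring_nf)
  refine h1.congr fun n => ?_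
  rw [norm_pow, norm_neg, norm_one, one_pow, Real.rpow_neg (by positivity), ← one_div]

lemma eta_hasSum {s : ℂ} (hs : 1 < s.re) :
    HasSum (fun n : ℕ => (-1:ℂ)^n / (((n:ℝ)+1 : ℝ) : ℂ)^s)
      ((1 - 2^(1-s)) * riemannZeta s) := by
  set S : ℕ → ℂ := fun n => 1 / (((n:ℝ)+1 : ℝ) : ℂ)^s with hS
  have hnorm : ∀ n : ℕ, ‖S n‖ = ((n:ℝ)+1)^(-s.re) := by
    intro n
    rw [hS, norm_div, norm_one,
      norm_cpow_eq_rpow_re_of_pos (by positivity), Real.rpow_neg (by positivity), one_div]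
  have hsum : Summable S := by
    have h0 : Summable (fun n : ℕ => ((n:ℝ))^(-s.re)) :=
      (Real.summable_nat_rpow (p := -s.re)).mpr (by linarith)
    have h1 : Summable (fun n : ℕ => ((n:ℝ)+1)^(-s.re)) := by
      have := (summable_nat_add_iff (f := fun n : ℕ => ((n:ℝ))^(-s.re)) 1).mpr h0
      exact this.congr (fun n => by push_cast; ring_nf)
    exact Summable.of_norm (h1.congr (fun n => (hnorm n).symm))
  have hζ : HasSum S (riemannZeta s) := by
    have := zeta_eq_tsum_one_div_nat_add_one_cpow hs
    have he : (fun n : ℕ => 1 / ((n:ℂ) + 1)^s) = S := by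
      funext n; rw [hS]; norm_num
    rw [he] at this
    exact this ▸ hsum.hasSum
  have hinj2 : Function.Injective (fun k : ℕ => 2*k) := fun a b h => by dsimp at h; omega
  have hinj2' : Function.Injective (fun k : ℕ => 2*k+1) := fun a b h => by dsimp at h; omega
  have hE : HasSum (fun k => S (2*k)) (∑' k, S (2*k)) := (hsum.comp_injective hinj2).hasSum
  have hO : HasSum (fun k => S (2*k+1)) (∑' k, S (2*k+1)) := (hsum.comp_injective hinj2').hasSum
  set A := ∑' k, S (2*k)
  set B := ∑' k, S (2*k+1)
  have hsplit : A + B = riemannZeta s := (hE.even_add_odd hO).unique hζ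
  have hOB : B = 2^(-s) * riemannZeta s := by
    have hfun : (fun k => S (2*k+1)) = fun k => (2:ℂ)^(-s) * S k := by
      funext k
      rw [hS]
      have h2 : (((2*k+1 : ℕ):ℝ) + 1 : ℝ) = 2 * ((k:ℝ)+1) := by push_cast; ring
      dsimp only
      rw [h2, Complex.ofReal_mul, mul_cpow_ofReal_nonneg (by norm_num : (0:ℝ) ≤ 2) (by positivity : (0:ℝ) ≤ (k:ℝ)+1), cpow_neg]
      push_cast
      rw [one_div, mul_inv, one_div]
    rw [hfun] at hO
    have := hζ.mul_left ((2:ℂ)^(-s))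
    exact hO.unique this
  have hf : HasSum (fun n : ℕ => (-1:ℂ)^n / (((n:ℝ)+1 : ℝ) : ℂ)^s) (A + -B) := by
    apply HasSum.even_add_odd
    · refine hE.congr_fun fun k => ?_
      rw [hS, pow_mul]
      norm_num
    · refine hO.neg.congr_fun fun k => ?_
      rw [hS, pow_succ, pow_mul]
      norm_num
      rw [neg_div, one_div]
  have hval : A + -B = (1 - 2^(1-s)) * riemannZeta s := by
    have h2pow : (2:ℂ)^(1-s) = 2 * 2^(-s) := by
      rw [sub_eq_add_neg, cpow_add _ _ (two_ne_zero), cpow_one]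
    linear_combination hsplit - 2*hOB + riemannZeta s * h2pow
  exact hval ▸ hf

lemma U_preconn : IsPreconnected {s : ℂ | 0 < s.re ∧ s ≠ 1} := by
  have hC : Convex ℝ {s : ℂ | 0 < s.re ∧ s.re < 1} :=
    (convex_halfSpace_re_gt 0).inter (convex_halfSpace_re_lt 1)
  have hA : Convex ℝ {s : ℂ | 0 < s.re ∧ 0 < s.im} :=
    (convex_halfSpace_re_gt 0).inter (convex_halfSpace_im_gt 0)
  have hB : Convex ℝ {s : ℂ | 0 < s.re ∧ s.im < 0} :=
    (convex_halfSpace_re_gt 0).inter (convex_halfSpace_im_lt 0)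
  have hD : Convex ℝ {s : ℂ | 1 < s.re} := convex_halfSpace_re_gt 1
  have hCA : IsPreconnected ({s : ℂ | 0 < s.re ∧ s.re < 1} ∪ {s : ℂ | 0 < s.re ∧ 0 < s.im}) := by
    refine IsPreconnected.union ((1 + I)/2) ?_ ?_ hC.isPreconnected hA.isPreconnected <;>
      constructor <;> simp <;> norm_num
  have hCAB : IsPreconnected (({s : ℂ | 0 < s.re ∧ s.re < 1} ∪ {s : ℂ | 0 < s.re ∧ 0 < s.im})
      ∪ {s : ℂ | 0 < s.re ∧ s.im < 0}) := by
    refine IsPreconnected.union ((1 - I)/2) (Or.inl ?_) ?_ hCA hB.isPreconnected <;>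
      constructor <;> simp <;> norm_num
  have hall : IsPreconnected ((({s : ℂ | 0 < s.re ∧ s.re < 1} ∪ {s : ℂ | 0 < s.re ∧ 0 < s.im})
      ∪ {s : ℂ | 0 < s.re ∧ s.im < 0}) ∪ {s : ℂ | 1 < s.re}) := by
    refine IsPreconnected.union (2 + I) (Or.inl (Or.inr ?_)) ?_ hCAB hD.isPreconnected <;> simp
  convert hall using 1
  ext s
  simp only [mem_setOf_eq, mem_union]
  constructor
  · rintro ⟨h0, h1⟩
    rcases lt_trichotomy s.im 0 with h | h | h
    · exact Or.inl (Or.inr ⟨h0, h⟩)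
    · rcases lt_trichotomy s.re 1 with h' | h' | h'
      · exact Or.inl (Or.inl (Or.inl ⟨h0, h'⟩))
      · exact absurd (Complex.ext h' h) (by simpa using h1)
      · exact Or.inr h'
    · exact Or.inl (Or.inl (Or.inr ⟨h0, h⟩))
  · rintro (((⟨h0, h1⟩ | ⟨h0, h1⟩) | ⟨h0, h1⟩) | h1)
    · exact ⟨h0, fun hc => by rw [hc] at h1; simp at h1⟩
    · exact ⟨h0, fun hc => by rw [hc] at h1; simp at h1⟩
    · exact ⟨h0, fun hc => by rw [hc] at h1; simp at h1⟩
    · exact ⟨by linarith, fun hc => by rw [hc] at h1; simp at h1⟩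


lemma mellin_Gfun_eq {s : ℂ} (h0 : 0 < s.re) (h1 : s ≠ 1) :
    mellin Gfun s = (1 - 2^(1-s)) * (Complex.Gamma s * riemannZeta s) := by
  set g : ℂ → ℂ := fun s => (1 - 2^(1-s)) * (Complex.Gamma s * riemannZeta s) with hg
  set U : Set ℂ := {s : ℂ | 0 < s.re ∧ s ≠ 1} with hU
  have hUo : IsOpen U := by
    rw [hU, Set.setOf_and]
    exact (isOpen_lt continuous_const Complex.continuous_re).inter isOpen_compl_singleton
  have hmem : ∀ {x : ℂ}, 1 < x.re → mellin Gfun x = g x := by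
    intro x hx
    have h1 := (eta_hasSum hx).mul_left (Complex.Gamma x)
    refine (mellin_hasSum hx).unique ((h1.congr_fun fun n => by rw [mul_div_assoc]).trans_eq ?_)
    rw [hg]
    ring
  have hGa : AnalyticOnNhd ℂ (mellin Gfun) U :=
    DifferentiableOn.analyticOnNhd (fun x hx => (G_diff hx.1).differentiableWithinAt) hUo
  have hga : AnalyticOnNhd ℂ g U := by
    refine DifferentiableOn.analyticOnNhd (fun x hx => DifferentiableAt.differentiableWithinAt ?_) hUo
    have d1 : DifferentiableAt ℂ (fun s : ℂ => (1:ℂ) - 2^(1-s)) x := by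
      refine (differentiableAt_const _).sub ?_
      exact DifferentiableAt.const_cpow ((differentiableAt_const _).sub differentiableAt_id)
        (Or.inl two_ne_zero)
    have d2 : DifferentiableAt ℂ Complex.Gamma x := by
      refine Complex.differentiableAt_Gamma x fun m => ?_
      intro hc
      have h3 : x.re = -(m:ℝ) := by rw [hc]; simp
      have h4 := hx.1
      rw [h3] at h4
      have : (0:ℝ) ≤ m := Nat.cast_nonneg m
      linarith
    exact d1.mul (d2.mul (differentiableAt_riemannZeta hx.2))
  have h2U : (2:ℂ) ∈ U := by constructor <;> norm_num
  have hev : mellin Gfun =ᶠ[nhds (2:ℂ)] g := by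
    have ho : IsOpen {s : ℂ | 1 < s.re} := isOpen_lt continuous_const Complex.continuous_re
    filter_upwards [ho.mem_nhds (by norm_num : 1 < (2:ℂ).re)] with x hx
    exact hmem hx
  exact hGa.eqOn_of_preconnected_of_eventuallyEq hga U_preconn h2U hev ⟨h0, h1⟩

lemma G_eq {s : ℂ} (h0 : 0 < s.re) (h1 : s ≠ 1) :
    G s = (1 - 2^(1-s)) * (Complex.Gamma s * riemannZeta s) := by
  rw [G_eq_mellin]
  exact mellin_Gfun_eq h0 h1


lemma two_sub_ne {z : ℂ} (hz : z.re < 1) : (2:ℂ) - 2^z ≠ 0 := by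
  intro hc
  have h2 : (2:ℂ)^z = 2 := by linear_combination -hc
  have h1 : ‖(2:ℂ)^z‖ = (2:ℝ)^z.re := by
    rw [show (2:ℂ) = ((2:ℝ):ℂ) by norm_num, norm_cpow_eq_rpow_re_of_pos (by norm_num)]
  rw [h2] at h1
  have : ‖(2:ℂ)‖ = (2:ℝ) := by norm_num
  rw [this] at h1
  have hlt : (2:ℝ)^z.re < (2:ℝ)^(1:ℝ) := Real.rpow_lt_rpow_left_iff (by norm_num) |>.mpr hz
  rw [← h1] at hlt
  simp at hlt

lemma one_sub_two_pow_ne {z : ℂ} (hz : z.re < 1) : (1:ℂ) - 2^(1-z) ≠ 0 := by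
  intro hc
  have h2 : (2:ℂ)^(1-z) = 1 := by linear_combination -hc
  have h1 : ‖(2:ℂ)^(1-z)‖ = (2:ℝ)^(1-z).re := by
    rw [show (2:ℂ) = ((2:ℝ):ℂ) by norm_num, norm_cpow_eq_rpow_re_of_pos (by norm_num)]
  rw [h2] at h1
  simp only [norm_one] at h1
  have hre : (1-z).re = 1 - z.re := by simp
  have hlt : (2:ℝ)^(0:ℝ) < (2:ℝ)^((1-z).re) := by
    refine Real.rpow_lt_rpow_left_iff (by norm_num) |>.mpr ?_
    rw [hre]; linarith
  rw [← h1] at hlt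
  norm_num at hlt

lemma key (z : ℂ) (h0 : 0 < z.re) (h1 : z.re < 1) :
    (Real.pi : ℂ) ^ (-z / 2) / (2 - 2 ^ z) * Complex.Gamma (1 - z / 2) * G z =
    -(1/2) * ((Real.sqrt Real.pi : ℂ))⁻¹ * (Complex.Gamma (1 - z/2) * Complex.Gamma (z/2 + 1/2))
      * completedRiemannZeta z := by
  have hz1 : z ≠ 1 := by intro hc; rw [hc] at h1; simp at h1
  have hz0 : z ≠ 0 := by intro hc; rw [hc] at h0; simp at h0
  have hG := G_eq h0 hz1
  have hζ : riemannZeta z = completedRiemannZeta z / Gammaℝ z := riemannZeta_def_of_ne_zero hz0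
  have hΓℝ : Gammaℝ z = (Real.pi:ℂ) ^ (-z/2) * Complex.Gamma (z/2) := Gammaℝ_def z
  have hΓℝne : Gammaℝ z ≠ 0 := Gammaℝ_ne_zero_of_re_pos h0
  have hdup : Complex.Gamma (z/2) * Complex.Gamma ((z+1)/2)
      = Complex.Gamma z * 2^(1-z) * (Real.sqrt Real.pi : ℂ) := by
    have h := Complex.Gamma_mul_Gamma_add_half (z/2)
    rw [show 2*(z/2) = z by ring] at h
    rw [show z/2+1/2 = (z+1)/2 by ring] at h
    exact h
  have h2z : (2:ℂ) - 2^z ≠ 0 := two_sub_ne h1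
  have h2zz : (1:ℂ) - 2^(1-z) ≠ 0 := one_sub_two_pow_ne h1
  have hmul : (2:ℂ)^(1-z) * 2^z = 2 := by
    rw [← cpow_add _ _ (two_ne_zero)]
    norm_num
  have hsqrt : ((Real.sqrt Real.pi : ℂ)) ≠ 0 := by
    rw [Complex.ofReal_ne_zero]
    positivity
  have hπ : (Real.pi:ℂ) ^ (-z/2) ≠ 0 := by
    rw [Ne, Complex.cpow_eq_zero_iff]
    simp [Real.pi_ne_zero]
  have h2zne : (2:ℂ)^z ≠ 0 := by
    rw [Ne, Complex.cpow_eq_zero_iff]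
    norm_num
  have hΓhalf : Complex.Gamma (z/2) ≠ 0 := by
    refine Complex.Gamma_ne_zero fun m => ?_
    intro hc
    have h3 := congrArg Complex.re hc
    rw [show (2:ℂ) = ((2:ℝ):ℂ) by norm_num, Complex.div_ofReal_re] at h3
    simp only [Complex.neg_re, Complex.natCast_re] at h3
    have : (0:ℝ) ≤ (m:ℝ) := Nat.cast_nonneg m
    linarith
  rw [hG, hζ, hΓℝ]
  field_simp
  linear_combination ((2 - 2^z) * Complex.Gamma ((2-z)/2) * completedRiemannZeta z) * hdup
    - (Complex.Gamma ((2-z)/2) * Complex.Gamma z * completedRiemannZeta z * ((Real.sqrt Real.pi : ℂ))) * hmul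

theorem G_functional_equation (z : ℂ) (hz : z.re ∈ Set.Ioo (0 : ℝ) 1) :
    (2 : ℂ) - 2 ^ z ≠ 0 ∧ (2 : ℂ) - 2 ^ (1 - z) ≠ 0 ∧
    (Real.pi : ℂ) ^ (-z / 2) / (2 - 2 ^ z) * Complex.Gamma (1 - z / 2) * G z =
      (Real.pi : ℂ) ^ (-(1 - z) / 2) / (2 - 2 ^ (1 - z)) *
        Complex.Gamma (1 - (1 - z) / 2) * G (1 - z) := by
  obtain ⟨h0, h1⟩ := hz
  have hre : (1-z).re = 1 - z.re := by simp
  have h0' : 0 < (1-z).re := by rw [hre]; linarith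
  have h1' : (1-z).re < 1 := by rw [hre]; linarith
  refine ⟨two_sub_ne h1, two_sub_ne h1', ?_⟩
  rw [key z h0 h1, key (1-z) h0' h1']
  rw [show (1-z)/2 + 1/2 = 1 - z/2 by ring, completedRiemannZeta_one_sub]
  ring
end

section
/- Let k : ℝ → ℝ be measurable, vanishing on (-∞, 0), with ∫₀^∞ (1 + y) |k(y)| dy < ∞ and ∫₀^∞ y k(y)² dy < ∞, and let k̂(x) := ∫₀^∞ e^{i x y} k(y) dy. Then lim_{δ → 0⁺} Re ∫₀^∞ e^{-δ x} conj(i k̂'(x)) · k̂(x) dx = -π ∫₀^∞ y k(y)² dy. -/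
open MeasureTheory Filter Set Complex

/-- The Fourier transform `k̂ x = ∫₀^∞ e^(i x y) k y dy` of a function supported on `[0,∞)`. -/
noncomputable def fhat (k : ℝ → ℝ) (x : ℝ) : ℂ :=
  ∫ y in Set.Ioi (0 : ℝ), Complex.exp (Complex.I * x * y) * k y

variable {k : ℝ → ℝ}

lemma aux_cexp_integrableOn {c : ℂ} (hc : c.re < 0) :
    IntegrableOn (fun x : ℝ => Complex.exp (c * x)) (Set.Ioi 0) := by
  have h := exp_neg_integrableOn_Ioi 0 (neg_pos.mpr hc)
  refine Integrable.mono' (g := fun x => Real.exp (- -c.re * x)) h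
    ((Complex.continuous_exp.comp (by continuity)).aestronglyMeasurable) ?_
  filter_upwards with x
  simp [Complex.norm_exp, Complex.mul_re]

lemma aux_cexp_integral {c : ℂ} (hc : c.re < 0) :
    ∫ x in Set.Ioi (0:ℝ), Complex.exp (c * x) = -c⁻¹ := by
  have hc0 : c ≠ 0 := fun h => by simp [h] at hc
  have key := integral_Ioi_of_hasDerivAt_of_tendsto
    (f := fun x : ℝ => c⁻¹ * Complex.exp (c * x))
    (f' := fun x : ℝ => Complex.exp (c * x)) (a := (0:ℝ)) (m := 0)
    ?_ ?_ (aux_cexp_integrableOn hc) ?_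
  · rw [key]; simp
  · exact (Continuous.continuousWithinAt (by continuity))
  · intro x hx
    have h1 : HasDerivAt (fun x : ℝ => c * (x:ℂ)) c x := by
      simpa using ((hasDerivAt_id x).ofReal_comp.const_mul c)
    have := (h1.cexp).const_mul c⁻¹
    convert this using 1
    exacts [rfl, by field_simp]
  · rw [show (0:ℂ) = c⁻¹ * 0 by ring]
    apply Tendsto.const_mul
    rw [tendsto_zero_iff_norm_tendsto_zero]
    have : ∀ x : ℝ, ‖Complex.exp (c * x)‖ = Real.exp (c.re * x) := by
      intro x; simp [Complex.norm_exp, Complex.mul_re]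
    simp_rw [this]
    exact Real.tendsto_exp_atBot.comp
      (tendsto_id.const_mul_atTop_of_neg hc)

variable {k : ℝ → ℝ}

lemma aux_k_int (hmeas : Measurable k)
    (hint : IntegrableOn (fun y => (1 + y) * |k y|) (Set.Ioi 0)) :
    IntegrableOn k (Set.Ioi 0) := by
  refine Integrable.mono' hint (hmeas.aestronglyMeasurable.restrict) ?_
  rw [ae_restrict_iff' measurableSet_Ioi]
  filter_upwards with y hy
  have : (0:ℝ) < y := hy
  rw [Real.norm_eq_abs]
  nlinarith [abs_nonneg (k y)]

lemma aux_yk_int (hmeas : Measurable k)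
    (hint : IntegrableOn (fun y => (1 + y) * |k y|) (Set.Ioi 0)) :
    IntegrableOn (fun y => y * k y) (Set.Ioi 0) := by
  refine Integrable.mono' hint ((measurable_id.mul hmeas).aestronglyMeasurable.restrict) ?_
  rw [ae_restrict_iff' measurableSet_Ioi]
  filter_upwards with y hy
  have h0 : (0:ℝ) < y := hy
  rw [Real.norm_eq_abs, abs_mul, abs_of_pos h0]
  nlinarith [abs_nonneg (k y)]

lemma aux_fhat_deriv (hmeas : Measurable k)
    (hint : IntegrableOn (fun y => (1 + y) * |k y|) (Set.Ioi 0)) (x : ℝ) :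
    HasDerivAt (fhat k)
      (∫ y in Set.Ioi (0:ℝ), Complex.I * y * Complex.exp (Complex.I * x * y) * k y) x := by
  have hmc : ∀ x : ℝ, AEStronglyMeasurable (fun y : ℝ => Complex.exp (Complex.I * x * y) * k y)
      (volume.restrict (Set.Ioi 0)) := by
    intro x
    exact ((Complex.continuous_exp.comp (by continuity)).aestronglyMeasurable.mul
      (Complex.measurable_ofReal.comp hmeas).aestronglyMeasurable).restrict
  have habs : ∀ (x y : ℝ), ‖Complex.exp (Complex.I * x * y)‖ = 1 := by
    intro x y
    simp [Complex.norm_exp]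
  have key := hasDerivAt_integral_of_dominated_loc_of_deriv_le (s := Metric.ball x 1) (Metric.ball_mem_nhds x one_pos)
    (F := fun (x:ℝ) (y:ℝ) => Complex.exp (Complex.I * x * y) * k y)
    (F' := fun (x:ℝ) (y:ℝ) => Complex.I * y * Complex.exp (Complex.I * x * y) * k y)
    (bound := fun y => (1 + y) * |k y|)
    (μ := volume.restrict (Set.Ioi 0)) (x₀ := x)
    (Filter.Eventually.of_forall hmc) ?_ ?_ ?_ ?_ ?_
  · exact key.2
  · -- integrable F x₀
    refine Integrable.mono' hint (hmc x) ?_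
    rw [ae_restrict_iff' measurableSet_Ioi]
    filter_upwards with y hy
    have : (0:ℝ) < y := hy
    rw [norm_mul, habs]
    simp only [Complex.norm_real, Real.norm_eq_abs, one_mul]
    nlinarith [abs_nonneg (k y)]
  · -- AESM F' x₀
    exact ((((Complex.measurable_ofReal.comp measurable_id).const_mul
      Complex.I).mul (Complex.measurable_exp.comp (by measurability))).mul
      (Complex.measurable_ofReal.comp hmeas)).aestronglyMeasurable.restrict
  · -- bound on F'
    rw [ae_restrict_iff' measurableSet_Ioi]
    filter_upwards with y hy
    intro x hx
    have h0 : (0:ℝ) < y := hy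
    simp only [norm_mul, habs, Complex.norm_real, Real.norm_eq_abs, mul_one, map_mul,
      Complex.norm_I, one_mul]
    rw [abs_of_pos h0]
    nlinarith [abs_nonneg (k y)]
  · exact hint
  · -- HasDerivAt in x for each y
    rw [ae_restrict_iff' measurableSet_Ioi]
    filter_upwards with y _
    intro x hx
    have h1 : HasDerivAt (fun x : ℝ => Complex.I * x * y) (Complex.I * y) x := by
      have := ((hasDerivAt_id x).ofReal_comp.const_mul (Complex.I * y))
      simpa [mul_comm, mul_assoc, mul_left_comm] using this
    simpa [mul_comm, mul_assoc, mul_left_comm] using (h1.cexp).mul_const ((k y : ℂ))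

lemma aux_sk_int (hmeas : Measurable k)
    (hint : IntegrableOn (fun y => (1 + y) * |k y|) (Set.Ioi 0)) :
    IntegrableOn (fun y => Real.sqrt y * k y) (Set.Ioi 0) := by
  refine Integrable.mono' hint
    ((Real.continuous_sqrt.measurable.mul hmeas).aestronglyMeasurable.restrict) ?_
  rw [ae_restrict_iff' measurableSet_Ioi]
  filter_upwards with y hy
  have h0 : (0:ℝ) < y := hy
  rw [Real.norm_eq_abs, abs_mul, _root_.abs_of_nonneg (Real.sqrt_nonneg y)]
  have h1 : Real.sqrt y ≤ 1 + y := by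
    nlinarith [Real.sq_sqrt h0.le, Real.sqrt_nonneg y]
  nlinarith [abs_nonneg (k y)]

lemma aux_Phi_int (hmeas : Measurable k)
    (hint : IntegrableOn (fun y => (1 + y) * |k y|) (Set.Ioi 0)) {δ : ℝ} (hδ : 0 < δ) :
    Integrable (fun p : ℝ × ℝ => p.1 * k p.1 * k p.2 * (δ / (δ^2 + (p.2 - p.1)^2)))
      ((volume.restrict (Set.Ioi 0)).prod (volume.restrict (Set.Ioi 0))) := by
  have hb : Integrable (fun p : ℝ × ℝ => |p.1 * k p.1| * |k p.2|)
      ((volume.restrict (Set.Ioi 0)).prod (volume.restrict (Set.Ioi 0))) :=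
    (aux_yk_int hmeas hint).abs.mul_prod (aux_k_int hmeas hint).abs
  refine Integrable.mono' (hb.const_mul δ⁻¹) ?_ ?_
  · apply Measurable.aestronglyMeasurable
    exact ((measurable_fst.mul (hmeas.comp measurable_fst)).mul
      (hmeas.comp measurable_snd)).mul
      (measurable_const.div (measurable_const.add
        ((measurable_snd.sub measurable_fst).pow_const 2)))
  · filter_upwards with p
    rw [Real.norm_eq_abs, abs_mul, abs_mul]
    have h1 : |δ / (δ^2 + (p.2 - p.1)^2)| ≤ δ⁻¹ := by
      rw [_root_.abs_of_nonneg (by positivity)]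
      rw [div_le_iff₀ (by positivity)]
      rw [inv_mul_eq_div, le_div_iff₀ hδ]
      nlinarith [sq_nonneg (p.2 - p.1)]
    calc |p.1 * k p.1| * |k p.2| * |δ / (δ^2 + (p.2-p.1)^2)|
        ≤ |p.1 * k p.1| * |k p.2| * δ⁻¹ := by
          apply mul_le_mul_of_nonneg_left h1 (by positivity)
      _ = δ⁻¹ * (|p.1 * k p.1| * |k p.2|) := by ring

lemma aux_step1 (hmeas : Measurable k)
    (hint : IntegrableOn (fun y => (1 + y) * |k y|) (Set.Ioi 0)) {δ : ℝ} (hδ : 0 < δ) :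
    (∫ x in Set.Ioi (0:ℝ),
        (Real.exp (-δ * x) : ℂ) *
          (starRingEnd ℂ (Complex.I * deriv (fhat k) x) * fhat k x)).re
    = - ∫ p : ℝ × ℝ, p.1 * k p.1 * k p.2 * (δ / (δ^2 + (p.2 - p.1)^2))
        ∂((volume.restrict (Set.Ioi 0)).prod (volume.restrict (Set.Ioi 0))) := by
  set μ0 := volume.restrict (Set.Ioi (0:ℝ)) with hμ0
  -- conjugate of I * deriv
  have hconj : ∀ x : ℝ, starRingEnd ℂ (Complex.I * deriv (fhat k) x)
      = ∫ y in Set.Ioi (0:ℝ), (-(y:ℂ)) * Complex.exp (-(Complex.I * x * y)) * k y := by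
    intro x
    rw [(aux_fhat_deriv hmeas hint x).deriv, map_mul, ← integral_conj,
      ← integral_const_mul]
    refine setIntegral_congr_fun measurableSet_Ioi (fun y _ => ?_)
    simp only [map_mul, Complex.conj_I, ← Complex.exp_conj, Complex.conj_ofReal]
    rw [show -Complex.I * (x:ℂ) * (y:ℂ) = -(Complex.I * x * y) by ring]
    linear_combination Complex.I_sq * ((y:ℂ) * Complex.exp (-(Complex.I * x * y)) * (k y : ℂ))
  -- product of two integrals as double integral
  have hprod : ∀ x : ℝ, starRingEnd ℂ (Complex.I * deriv (fhat k) x) * fhat k x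
      = ∫ p : ℝ × ℝ, ((-(p.1:ℂ)) * Complex.exp (-(Complex.I * x * p.1)) * k p.1)
          * (Complex.exp (Complex.I * x * p.2) * k p.2) ∂(μ0.prod μ0) := by
    intro x
    rw [hconj x, fhat]
    exact (integral_prod_mul _ _).symm
  -- the triple integrand
  set F : ℝ → ℝ × ℝ → ℂ := fun x p =>
    (Real.exp (-δ * x) : ℂ) * (((-(p.1:ℂ)) * Complex.exp (-(Complex.I * x * p.1)) * k p.1)
      * (Complex.exp (Complex.I * x * p.2) * k p.2)) with hF
  have hnormF : ∀ x (p : ℝ × ℝ), ‖F x p‖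
      = Real.exp (-δ * x) * (|p.1 * k p.1| * |k p.2|) := by
    intro x p
    simp only [hF, norm_mul, norm_neg, Complex.norm_real, Real.norm_eq_abs, Complex.norm_exp]
    rw [show (-(Complex.I * (x:ℂ) * p.1)).re = 0 by simp,
      show (Complex.I * (x:ℂ) * p.2).re = 0 by simp]
    simp only [Real.exp_zero, one_mul, mul_one, abs_mul,
      _root_.abs_of_nonneg (Real.exp_nonneg (-δ * x))]
    try ring
  have hFmeas : AEStronglyMeasurable (Function.uncurry F) (μ0.prod (μ0.prod μ0)) := by
    apply Measurable.aestronglyMeasurable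
    have m1 : Measurable (fun q : ℝ × (ℝ × ℝ) => Complex.I * (q.1 : ℂ) * (q.2.1 : ℂ)) :=
      ((Complex.measurable_ofReal.comp measurable_fst).const_mul Complex.I).mul
        (Complex.measurable_ofReal.comp (measurable_fst.comp measurable_snd))
    have m2 : Measurable (fun q : ℝ × (ℝ × ℝ) => Complex.I * (q.1 : ℂ) * (q.2.2 : ℂ)) :=
      ((Complex.measurable_ofReal.comp measurable_fst).const_mul Complex.I).mul
        (Complex.measurable_ofReal.comp (measurable_snd.comp measurable_snd))
    exact (Complex.measurable_ofReal.comp ((measurable_fst.const_mul (-δ)).exp)).mul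
      ((((Complex.measurable_ofReal.comp (measurable_fst.comp measurable_snd)).neg.mul
          (Complex.measurable_exp.comp m1.neg)).mul
        (Complex.measurable_ofReal.comp (hmeas.comp (measurable_fst.comp measurable_snd)))).mul
        ((Complex.measurable_exp.comp m2).mul
          (Complex.measurable_ofReal.comp (hmeas.comp (measurable_snd.comp measurable_snd)))))
  have hFint : Integrable (Function.uncurry F) (μ0.prod (μ0.prod μ0)) := by
    have hexp : Integrable (fun x : ℝ => Real.exp (-δ * x)) μ0 :=
      exp_neg_integrableOn_Ioi 0 hδ
    have hb : Integrable (fun q : ℝ × (ℝ × ℝ) =>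
        Real.exp (-δ * q.1) * (|q.2.1 * k q.2.1| * |k q.2.2|)) (μ0.prod (μ0.prod μ0)) :=
      hexp.mul_prod ((aux_yk_int hmeas hint).abs.mul_prod (aux_k_int hmeas hint).abs)
    refine Integrable.mono' hb hFmeas ?_
    filter_upwards with q
    rw [Function.uncurry, hnormF]
  -- value of inner x-integral
  have hinner : ∀ p : ℝ × ℝ, (∫ x in Set.Ioi (0:ℝ), F x p)
      = ((-(p.1 * k p.1 * k p.2) : ℝ) : ℂ)
        * (-(-(δ:ℂ) + Complex.I * ((p.2 : ℝ) - (p.1 : ℝ) : ℝ))⁻¹) := by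
    intro p
    set c : ℂ := -(δ:ℂ) + Complex.I * ((p.2 - p.1 : ℝ) : ℂ) with hc
    have hcre : c.re < 0 := by simp [hc, hδ]
    have hpt : ∀ x : ℝ, F x p = ((-(p.1 * k p.1 * k p.2) : ℝ) : ℂ) * Complex.exp (c * x) := by
      intro x
      have harg : c * x = ((-δ * x : ℝ) : ℂ) + (-(Complex.I * x * p.1)) + Complex.I * x * p.2 := by
        simp only [hc]
        push_cast
        ring
      rw [harg, Complex.exp_add, Complex.exp_add, hF]
      push_cast
      ring
    simp_rw [hpt]
    rw [integral_const_mul, aux_cexp_integral hcre]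
  -- swap
  have hswap := integral_integral_swap (μ := μ0) (ν := μ0.prod μ0)
    (f := F) hFint
  -- rewrite LHS
  have hLHS : (∫ x in Set.Ioi (0:ℝ), (Real.exp (-δ * x) : ℂ) *
      (starRingEnd ℂ (Complex.I * deriv (fhat k) x) * fhat k x))
      = ∫ p : ℝ × ℝ, (∫ x : ℝ, F x p ∂μ0) ∂(μ0.prod μ0) := by
    rw [← hswap]
    refine setIntegral_congr_fun measurableSet_Ioi (fun x _ => ?_)
    rw [hprod x, ← integral_const_mul]
  rw [hLHS]
  -- take real parts
  have hval : ∀ p : ℝ × ℝ, (∫ x : ℝ, F x p ∂μ0)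
      = ((-(p.1 * k p.1 * k p.2) : ℝ) : ℂ)
        * (-(-(δ:ℂ) + Complex.I * ((p.2 : ℝ) - (p.1 : ℝ) : ℝ))⁻¹) := hinner
  have hre : ∀ p : ℝ × ℝ,
      (((-(p.1 * k p.1 * k p.2) : ℝ) : ℂ)
        * (-(-(δ:ℂ) + Complex.I * ((p.2 : ℝ) - (p.1 : ℝ) : ℝ))⁻¹)).re
      = -(p.1 * k p.1 * k p.2 * (δ / (δ^2 + (p.2 - p.1)^2))) := by
    intro p
    rw [Complex.re_ofReal_mul]
    have h1 : (-(-(δ:ℂ) + Complex.I * ((p.2 : ℝ) - (p.1 : ℝ) : ℝ))⁻¹).re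
        = δ / (δ^2 + (p.2 - p.1)^2) := by
      have hre2 : (-(δ:ℂ) + Complex.I * ((p.2 - p.1 : ℝ) : ℂ)).re = -δ := by simp
      have him2 : (-(δ:ℂ) + Complex.I * ((p.2 - p.1 : ℝ) : ℂ)).im = p.2 - p.1 := by simp
      rw [Complex.neg_re, Complex.inv_re, Complex.normSq_apply, hre2, him2]
      ring
    rw [h1]
    ring
  have hIntVal : Integrable (fun p : ℝ × ℝ => ((-(p.1 * k p.1 * k p.2) : ℝ) : ℂ)
      * (-(-(δ:ℂ) + Complex.I * ((p.2 : ℝ) - (p.1 : ℝ) : ℝ))⁻¹)) (μ0.prod μ0) := by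
    have hb : Integrable (fun p : ℝ × ℝ => |p.1 * k p.1| * |k p.2|) (μ0.prod μ0) :=
      (aux_yk_int hmeas hint).abs.mul_prod (aux_k_int hmeas hint).abs
    refine Integrable.mono' (hb.const_mul δ⁻¹) ?_ ?_
    · apply Measurable.aestronglyMeasurable
      refine Measurable.mul ?_ ?_
      · exact Complex.measurable_ofReal.comp
          (((measurable_fst.mul (hmeas.comp measurable_fst)).mul
            (hmeas.comp measurable_snd)).neg)
      · refine Measurable.neg (Measurable.inv ?_)
        exact measurable_const.add
          ((Complex.measurable_ofReal.comp (measurable_snd.sub measurable_fst)).const_mul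
            Complex.I)
    · filter_upwards with p
      rw [norm_mul]
      have h2 : ‖(-(-(δ:ℂ) + Complex.I * ((p.2 : ℝ) - (p.1 : ℝ) : ℝ))⁻¹)‖ ≤ δ⁻¹ := by
        rw [norm_neg, norm_inv]
        have habs : δ ≤ ‖-(δ:ℂ) + Complex.I * ((p.2 - p.1 : ℝ) : ℂ)‖ := by
          have h3 := Complex.abs_re_le_norm (-(δ:ℂ) + Complex.I * ((p.2 - p.1 : ℝ) : ℂ))
          rw [show (-(δ:ℂ) + Complex.I * ((p.2 - p.1 : ℝ) : ℂ)).re = -δ by simp] at h3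
          rwa [abs_neg, _root_.abs_of_pos hδ] at h3
        exact inv_anti₀ hδ habs
      calc ‖((-(p.1 * k p.1 * k p.2) : ℝ) : ℂ)‖ * ‖(-(-(δ:ℂ) + Complex.I * ((p.2:ℝ) - (p.1:ℝ) : ℝ))⁻¹)‖
          ≤ ‖((-(p.1 * k p.1 * k p.2) : ℝ) : ℂ)‖ * δ⁻¹ :=
            mul_le_mul_of_nonneg_left h2 (norm_nonneg _)
        _ = δ⁻¹ * (|p.1 * k p.1| * |k p.2|) := by
            rw [Complex.norm_real, Real.norm_eq_abs, abs_neg, abs_mul, abs_mul]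
            ring
  simp_rw [hval]
  have h := integral_re (μ := μ0.prod μ0) hIntVal
  simp only [RCLike.re_to_complex] at h
  rw [← h, ← integral_neg]
  exact integral_congr_ae (Filter.Eventually.of_forall (fun p => hre p))



variable {k : ℝ → ℝ}

noncomputable def auxH (k : ℝ → ℝ) : ℝ → ℝ :=
  (Set.Ioi (0:ℝ)).indicator (fun y => Real.sqrt y * k y)

def auxS : MeasurableEquiv (ℝ × ℝ) (ℝ × ℝ) where
  toFun := fun q => (q.2, q.2 + q.1)
  invFun := fun p => (p.2 - p.1, p.1)
  left_inv := fun q => by simp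
  right_inv := fun p => by simp
  measurable_toFun := measurable_snd.prodMk (measurable_snd.add measurable_fst)
  measurable_invFun := (measurable_snd.sub measurable_fst).prodMk measurable_fst

lemma auxS_mp : MeasurePreserving (⇑auxS) ((volume : Measure ℝ).prod volume)
    ((volume : Measure ℝ).prod volume) :=
  measurePreserving_prod_add_swap volume volume

lemma auxH_meas (hmeas : Measurable k) : Measurable (auxH k) :=
  (Real.continuous_sqrt.measurable.mul hmeas).indicator measurableSet_Ioi

lemma auxH_sq (y : ℝ) : auxH k y * auxH k y
    = (Set.Ioi (0:ℝ)).indicator (fun y => y * k y ^ 2) y := by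
  by_cases hy : y ∈ Set.Ioi (0:ℝ)
  · rw [auxH, Set.indicator_of_mem hy, Set.indicator_of_mem hy]
    have : Real.sqrt y * Real.sqrt y = y := Real.mul_self_sqrt (le_of_lt hy)
    ring_nf
    rw [Real.sq_sqrt (le_of_lt hy)]
    ring
  · rw [auxH, Set.indicator_of_notMem hy, Set.indicator_of_notMem hy, mul_zero]

lemma auxH_int (hmeas : Measurable k)
    (hint : IntegrableOn (fun y => (1 + y) * |k y|) (Set.Ioi 0)) :
    Integrable (auxH k) volume := by
  rw [auxH, integrable_indicator_iff measurableSet_Ioi]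
  refine Integrable.mono' hint
    ((Real.continuous_sqrt.measurable.mul hmeas).aestronglyMeasurable.restrict) ?_
  rw [ae_restrict_iff' measurableSet_Ioi]
  filter_upwards with y hy
  have h0 : (0:ℝ) < y := hy
  rw [Real.norm_eq_abs, abs_mul, _root_.abs_of_nonneg (Real.sqrt_nonneg y)]
  have h1 : Real.sqrt y ≤ 1 + y := by
    nlinarith [Real.sq_sqrt (le_of_lt h0), Real.sqrt_nonneg y]
  nlinarith [abs_nonneg (k y)]

lemma auxH_memL2 (hmeas : Measurable k)
    (hint' : IntegrableOn (fun y => y * k y ^ 2) (Set.Ioi 0)) :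
    MemLp (auxH k) 2 volume := by
  rw [memLp_two_iff_integrable_sq (auxH_meas hmeas).aestronglyMeasurable]
  have : (fun y => auxH k y ^ 2)
      = (Set.Ioi (0:ℝ)).indicator (fun y => y * k y ^ 2) := by
    funext y
    rw [sq, auxH_sq]
  rw [this, integrable_indicator_iff measurableSet_Ioi]
  exact hint'

lemma aux_L2mul {f g : ℝ → ℝ} (hf : MemLp f 2 volume) (hg : MemLp g 2 volume) :
    Integrable (fun y => f y * g y) volume := by
  have h := hg.smul (φ := f) hf (p := 2) (q := 2) (r := 1)
  rw [memLp_one_iff_integrable] at h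
  exact h.congr (Filter.Eventually.of_forall (fun y => by simp [smul_eq_mul]))

lemma aux_A_tendsto (hmeas : Measurable k)
    (hint : IntegrableOn (fun y => (1 + y) * |k y|) (Set.Ioi 0))
    (hint' : IntegrableOn (fun y => y * k y ^ 2) (Set.Ioi 0)) :
    Tendsto (fun δ : ℝ => ∫ p : ℝ × ℝ,
        Real.sqrt p.1 * Real.sqrt p.2 * (k p.1 * k p.2) * (δ / (δ^2 + (p.2 - p.1)^2))
        ∂((volume.restrict (Set.Ioi 0)).prod (volume.restrict (Set.Ioi 0))))
      (nhdsWithin 0 (Set.Ioi 0))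
      (nhds (Real.pi * ∫ y in Set.Ioi (0:ℝ), y * k y ^ 2)) := by
  set H : ℝ → ℝ := auxH k with hHdef
  have hHmeas : Measurable H := auxH_meas hmeas
  have hH2 : MemLp H 2 volume := auxH_memL2 hmeas hint'
  set HL : Lp ℝ 2 volume := hH2.toLp H with hHL
  set cm : ℝ → C(ℝ, ℝ) := fun t => ⟨fun x => x + t, by continuity⟩ with hcmdef
  have hcm : Continuous cm := by
    apply ContinuousMap.continuous_of_continuous_uncurry
    exact continuous_snd.add continuous_fst
  have hmp : ∀ t : ℝ, MeasurePreserving (cm t) volume volume :=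
    fun t => measurePreserving_add_right volume t
  set T : ℝ → Lp ℝ 2 volume := fun t => Lp.compMeasurePreserving (cm t) (hmp t) HL with hT
  have hTc : Continuous T :=
    Continuous.compMeasurePreservingLp continuous_const hcm hmp (by norm_num)
  set φ : ℝ → ℝ := fun t => (inner ℝ (HL) (T t) : ℝ) with hφ
  have hφc : Continuous φ := continuous_const.inner hTc
  -- pointwise formula for φ
  have hφeq : ∀ t : ℝ, φ t = ∫ y : ℝ, H y * H (y + t) := by
    intro t
    show (inner ℝ HL (T t) : ℝ) = _
    rw [MeasureTheory.L2.inner_def]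
    simp only [RCLike.inner_apply, conj_trivial]
    refine integral_congr_ae ?_
    have h1 : (HL : ℝ → ℝ) =ᵐ[volume] H := hH2.coeFn_toLp
    have h2 : (T t : ℝ → ℝ) =ᵐ[volume] (HL : ℝ → ℝ) ∘ (cm t) :=
      Lp.coeFn_compMeasurePreserving HL (hmp t)
    have h3 : ((HL : ℝ → ℝ) ∘ (cm t)) =ᵐ[volume] (H ∘ (cm t)) :=
      (hmp t).quasiMeasurePreserving.ae_eq_comp h1
    filter_upwards [h1, h2, h3] with y e1 e2 e3
    rw [e1, e2, e3]
    exact mul_comm _ _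
  -- bound for φ
  have hφbdd : ∀ t : ℝ, |φ t| ≤ ‖HL‖ * ‖HL‖ := by
    intro t
    rw [hφ]
    calc |(inner ℝ HL (T t) : ℝ)| ≤ ‖HL‖ * ‖T t‖ := abs_real_inner_le_norm _ _
      _ = ‖HL‖ * ‖HL‖ := by rw [hT, Lp.norm_compMeasurePreserving]
  -- value at 0
  have hφ0 : φ 0 = ∫ y in Set.Ioi (0:ℝ), y * k y ^ 2 := by
    rw [hφeq 0, ← integral_indicator measurableSet_Ioi]
    refine integral_congr_ae (Filter.Eventually.of_forall (fun y => ?_))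
    simp only [add_zero]
    rw [auxH_sq]
  -- Integrability of sections via L2
  have hHtrans : ∀ t : ℝ, MemLp (fun y => H (y + t)) 2 volume := by
    intro t
    exact hH2.comp_measurePreserving (hmp t)
  have hsec : ∀ t : ℝ, Integrable (fun y => H y * H (y + t)) volume :=
    fun t => aux_L2mul hH2 (hHtrans t)
  -- abs bound on section integrals
  have hA2 : MemLp (fun y => |H y|) 2 volume := hH2.norm
  set AL : Lp ℝ 2 volume := hA2.toLp _ with hAL
  set C : ℝ := ‖AL‖ * ‖AL‖ with hC
  have hCnn : 0 ≤ C := mul_nonneg (norm_nonneg _) (norm_nonneg _)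
  have habs : ∀ t : ℝ, (∫ y : ℝ, |H y * H (y + t)|) ≤ C := by
    intro t
    have h1 : (∫ y : ℝ, |H y * H (y + t)|)
        = (inner ℝ AL (Lp.compMeasurePreserving (cm t) (hmp t) AL) : ℝ) := by
      rw [MeasureTheory.L2.inner_def]
      simp only [RCLike.inner_apply, conj_trivial]
      refine integral_congr_ae ?_
      have h1 : (AL : ℝ → ℝ) =ᵐ[volume] fun y => |H y| := hA2.coeFn_toLp
      have h2 : (Lp.compMeasurePreserving (cm t) (hmp t) AL : ℝ → ℝ) =ᵐ[volume]
          (AL : ℝ → ℝ) ∘ (cm t) := Lp.coeFn_compMeasurePreserving AL (hmp t)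
      have h3 : ((AL : ℝ → ℝ) ∘ (cm t)) =ᵐ[volume] ((fun y => |H y|) ∘ (cm t)) :=
        (hmp t).quasiMeasurePreserving.ae_eq_comp h1
      filter_upwards [h1, h2, h3] with y e1 e2 e3
      rw [abs_mul, e1, e2, e3]
      exact mul_comm _ _
    rw [h1]
    calc (inner ℝ AL (Lp.compMeasurePreserving (cm t) (hmp t) AL) : ℝ)
        ≤ ‖AL‖ * ‖Lp.compMeasurePreserving (cm t) (hmp t) AL‖ := real_inner_le_norm _ _
      _ = C := by rw [Lp.norm_compMeasurePreserving, hC]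
  -- key identity for fixed positive δ
  have hkey : ∀ δ : ℝ, 0 < δ →
      (∫ p : ℝ × ℝ,
        Real.sqrt p.1 * Real.sqrt p.2 * (k p.1 * k p.2) * (δ / (δ^2 + (p.2 - p.1)^2))
        ∂((volume.restrict (Set.Ioi 0)).prod (volume.restrict (Set.Ioi 0))))
      = ∫ x : ℝ, φ (δ * x) * (1 + x^2)⁻¹ := by
    intro δ hδ
    -- P is integrable
    have hPm : Measurable (fun t : ℝ => δ / (δ^2 + t^2)) :=
      measurable_const.div (measurable_const.add (measurable_id.pow_const 2))
    have hPnn : ∀ t : ℝ, 0 ≤ δ / (δ^2 + t^2) := fun t => by positivity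
    have hPint : Integrable (fun t : ℝ => δ / (δ^2 + t^2)) volume := by
      refine Integrable.mono' (integrable_inv_one_add_sq.const_mul (max δ δ⁻¹))
        hPm.aestronglyMeasurable ?_
      filter_upwards with t
      rw [Real.norm_eq_abs, _root_.abs_of_nonneg (hPnn t)]
      rw [show max δ δ⁻¹ * (1 + t^2)⁻¹ = max δ δ⁻¹ / (1 + t^2) by rw [div_eq_mul_inv]]
      rw [div_le_div_iff₀ (by positivity) (by positivity)]
      have h1 : δ⁻¹ ≤ max δ δ⁻¹ := le_max_right _ _
      have h2 : δ ≤ max δ δ⁻¹ := le_max_left _ _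
      have e1 : δ⁻¹ * δ^2 = δ := by field_simp [pow_two]
      nlinarith [mul_le_mul_of_nonneg_right h1 (sq_nonneg δ),
        mul_le_mul_of_nonneg_right h2 (sq_nonneg t)]
    set P : ℝ → ℝ := fun t => δ / (δ^2 + t^2) with hPdef
    set f2 : ℝ × ℝ → ℝ := fun q => H q.2 * H (q.2 + q.1) * P q.1 with hf2
    have hf2m : AEStronglyMeasurable f2 (volume.prod volume) := by
      apply Measurable.aestronglyMeasurable
      exact ((hHmeas.comp measurable_snd).mul
        (hHmeas.comp (measurable_snd.add measurable_fst))).mul (hPm.comp measurable_fst)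
    have hf2int : Integrable f2 (volume.prod volume) := by
      refine (integrable_prod_iff hf2m).mpr ⟨?_, ?_⟩
      · filter_upwards with t
        exact (hsec t).mul_const (P t)
      · refine Integrable.mono' (hPint.const_mul C) (hf2m.norm.integral_prod_right') ?_
        filter_upwards with t
        have h0 : 0 ≤ ∫ y : ℝ, ‖f2 (t, y)‖ := integral_nonneg (fun y => norm_nonneg _)
        rw [Real.norm_eq_abs, _root_.abs_of_nonneg h0]
        have hptw : ∀ y : ℝ, ‖f2 (t, y)‖ = |H y * H (y + t)| * P t := by
          intro y
          rw [Real.norm_eq_abs, abs_mul, _root_.abs_of_nonneg (hPnn t)]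
        calc (∫ y : ℝ, ‖f2 (t, y)‖)
            = ∫ y : ℝ, |H y * H (y + t)| * P t :=
              integral_congr_ae (Filter.Eventually.of_forall hptw)
          _ = (∫ y : ℝ, |H y * H (y + t)|) * P t := by rw [integral_mul_const]
          _ ≤ C * P t := mul_le_mul_of_nonneg_right (habs t) (hPnn t)
    set f1 : ℝ × ℝ → ℝ := fun p => H p.1 * H p.2 * P (p.2 - p.1) with hf1
    have hf1m : AEStronglyMeasurable f1 (volume.prod volume) := by
      apply Measurable.aestronglyMeasurable
      exact ((hHmeas.comp measurable_fst).mul (hHmeas.comp measurable_snd)).mul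
        (hPm.comp (measurable_snd.sub measurable_fst))
    have hcomp : ∀ q : ℝ × ℝ, f1 (auxS q) = f2 q := by
      intro q
      show H q.2 * H (q.2 + q.1) * P (q.2 + q.1 - q.2) = H q.2 * H (q.2 + q.1) * P q.1
      rw [add_sub_cancel_left]
    have hf1int : Integrable f1 (volume.prod volume) := by
      refine (auxS_mp.integrable_comp hf1m).mp ?_
      refine hf2int.congr ?_
      exact Filter.Eventually.of_forall (fun q => (hcomp q).symm)
    -- chain of identities
    have e1 : (∫ p : ℝ × ℝ,
        Real.sqrt p.1 * Real.sqrt p.2 * (k p.1 * k p.2) * (δ / (δ^2 + (p.2 - p.1)^2))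
        ∂((volume.restrict (Set.Ioi 0)).prod (volume.restrict (Set.Ioi 0))))
        = ∫ p : ℝ × ℝ, f1 p ∂(volume.prod volume) := by
      rw [Measure.prod_restrict, ← integral_indicator (measurableSet_Ioi.prod measurableSet_Ioi)]
      refine integral_congr_ae (Filter.Eventually.of_forall (fun p => ?_))
      by_cases hp : p ∈ (Set.Ioi (0:ℝ)) ×ˢ (Set.Ioi (0:ℝ))
      · rw [Set.indicator_of_mem hp]
        have h1 : H p.1 = Real.sqrt p.1 * k p.1 := Set.indicator_of_mem hp.1 _
        have h2 : H p.2 = Real.sqrt p.2 * k p.2 := Set.indicator_of_mem hp.2 _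
        rw [hf1]
        show Real.sqrt p.1 * Real.sqrt p.2 * (k p.1 * k p.2) * (δ / (δ^2 + (p.2 - p.1)^2))
          = H p.1 * H p.2 * P (p.2 - p.1)
        rw [h1, h2, hPdef]
        ring
      · rw [Set.indicator_of_notMem hp]
        rw [Set.mem_prod] at hp
        push_neg at hp
        by_cases hp1 : p.1 ∈ Set.Ioi (0:ℝ)
        · have h2 : H p.2 = 0 := Set.indicator_of_notMem (hp hp1) _
          show (0:ℝ) = H p.1 * H p.2 * P (p.2 - p.1)
          rw [h2]; ring
        · have h1 : H p.1 = 0 := Set.indicator_of_notMem hp1 _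
          show (0:ℝ) = H p.1 * H p.2 * P (p.2 - p.1)
          rw [h1]; ring
    have e2 : (∫ p : ℝ × ℝ, f1 p ∂(volume.prod volume))
        = ∫ q : ℝ × ℝ, f2 q ∂(volume.prod volume) := by
      rw [← auxS_mp.integral_comp auxS.measurableEmbedding f1]
      exact integral_congr_ae (Filter.Eventually.of_forall (fun q => hcomp q))
    have e3 : (∫ q : ℝ × ℝ, f2 q ∂(volume.prod volume)) = ∫ t : ℝ, φ t * P t := by
      rw [integral_prod _ hf2int]
      refine integral_congr_ae (Filter.Eventually.of_forall (fun t => ?_))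
      show (∫ y : ℝ, H y * H (y + t) * P t) = φ t * P t
      rw [integral_mul_const, hφeq t]
    have e4 : (∫ t : ℝ, φ t * P t) = ∫ x : ℝ, φ (δ * x) * (1 + x^2)⁻¹ := by
      have h := MeasureTheory.Measure.integral_comp_mul_left (fun t => φ t * P t) δ
      rw [smul_eq_mul] at h
      have h5 : ∀ x : ℝ, φ (δ * x) * P (δ * x) = δ⁻¹ * (φ (δ * x) * (1 + x^2)⁻¹) := by
        intro x
        rw [hPdef]
        show φ (δ * x) * (δ / (δ^2 + (δ*x)^2)) = δ⁻¹ * (φ (δ * x) * (1 + x^2)⁻¹)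
        rw [show δ^2 + (δ*x)^2 = δ^2 * (1 + x^2) by ring]
        rw [div_eq_mul_inv, mul_inv, pow_two, mul_inv]
        field_simp
      have h' : (∫ x : ℝ, φ (δ * x) * P (δ * x))
          = δ⁻¹ * ∫ x : ℝ, φ (δ * x) * (1 + x^2)⁻¹ := by
        rw [← integral_const_mul]
        exact integral_congr_ae (Filter.Eventually.of_forall h5)
      rw [h'] at h
      rw [_root_.abs_of_nonneg (inv_nonneg.mpr (le_of_lt hδ))] at h
      exact (mul_left_cancel₀ (inv_ne_zero (ne_of_gt hδ)) h).symm
    rw [e1, e2, e3, e4]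
  -- the limit
  have hbound : Integrable (fun x : ℝ => (‖HL‖ * ‖HL‖) * (1 + x^2)⁻¹) volume :=
    integrable_inv_one_add_sq.const_mul _
  have hlim : Tendsto (fun δ : ℝ => ∫ x : ℝ, φ (δ * x) * (1 + x^2)⁻¹)
      (nhdsWithin 0 (Set.Ioi 0)) (nhds (Real.pi * ∫ y in Set.Ioi (0:ℝ), y * k y ^ 2)) := by
    have hval : (Real.pi * ∫ y in Set.Ioi (0:ℝ), y * k y ^ 2)
        = ∫ x : ℝ, φ 0 * (1 + x^2)⁻¹ := by
      rw [integral_const_mul, integral_univ_inv_one_add_sq, hφ0]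
      ring
    rw [hval]
    refine tendsto_integral_filter_of_dominated_convergence
      (bound := fun x : ℝ => (‖HL‖ * ‖HL‖) * (1 + x^2)⁻¹) ?_ ?_ hbound ?_
    · filter_upwards with δ
      apply Continuous.aestronglyMeasurable
      refine Continuous.mul (hφc.comp (continuous_const.mul continuous_id)) ?_
      exact Continuous.inv₀ (continuous_const.add (continuous_pow 2)) (fun x => by positivity)
    · filter_upwards with δ
      filter_upwards with x
      rw [Real.norm_eq_abs, abs_mul, _root_.abs_of_nonneg (a := (1+x^2)⁻¹) (by positivity)]
      exact mul_le_mul_of_nonneg_right (hφbdd _) (by positivity)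
    · filter_upwards with x
      refine Tendsto.mul_const _ ?_
      have h1 : Tendsto (fun δ : ℝ => δ * x) (nhdsWithin 0 (Set.Ioi 0)) (nhds 0) := by
        refine Tendsto.mono_left ?_ nhdsWithin_le_nhds
        simpa using ((continuous_mul_right x).tendsto (0:ℝ))
      exact (hφc.tendsto 0).comp h1
  refine Tendsto.congr' ?_ hlim
  filter_upwards [eventually_mem_nhdsWithin] with δ hδ
  exact (hkey δ hδ).symm

-- ae facts
lemma aux_ae_mem :
    ∀ᵐ p : ℝ × ℝ ∂((volume.restrict (Set.Ioi 0)).prod (volume.restrict (Set.Ioi 0))),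
      p ∈ (Set.Ioi (0:ℝ)) ×ˢ (Set.Ioi (0:ℝ)) := by
  have h := ae_restrict_mem (μ := (volume : Measure ℝ).prod volume)
    (s := (Set.Ioi (0:ℝ)) ×ˢ (Set.Ioi (0:ℝ))) (measurableSet_Ioi.prod measurableSet_Ioi)
  rwa [← Measure.prod_restrict] at h

lemma aux_ae_ne :
    ∀ᵐ p : ℝ × ℝ ∂((volume.restrict (Set.Ioi 0)).prod (volume.restrict (Set.Ioi 0))),
      p.1 ≠ p.2 := by
  set μ0 := volume.restrict (Set.Ioi (0:ℝ))
  have hD : MeasurableSet {p : ℝ × ℝ | p.1 = p.2} :=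
    measurableSet_eq_fun measurable_fst measurable_snd
  rw [ae_iff]
  simp only [ne_eq, not_not]
  rw [Measure.prod_apply hD]
  have hz : ∀ x : ℝ, μ0 (Prod.mk x ⁻¹' {p : ℝ × ℝ | p.1 = p.2}) = 0 := by
    intro x
    have he : Prod.mk x ⁻¹' {p : ℝ × ℝ | p.1 = p.2} = {x} := by
      ext y
      simp [eq_comm]
    rw [he, Measure.restrict_apply (MeasurableSet.singleton x)]
    exact measure_mono_null Set.inter_subset_left (Real.volume_singleton)
  simp [hz]

lemma aux_step2 (hmeas : Measurable k)
    (hint : IntegrableOn (fun y => (1 + y) * |k y|) (Set.Ioi 0)) {δ : ℝ} (hδ : 0 < δ) :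
    (∫ p : ℝ × ℝ, p.1 * k p.1 * k p.2 * (δ / (δ^2 + (p.2 - p.1)^2))
      ∂((volume.restrict (Set.Ioi 0)).prod (volume.restrict (Set.Ioi 0))))
    = (∫ p : ℝ × ℝ,
        Real.sqrt p.1 * Real.sqrt p.2 * (k p.1 * k p.2) * (δ / (δ^2 + (p.2 - p.1)^2))
        ∂((volume.restrict (Set.Ioi 0)).prod (volume.restrict (Set.Ioi 0))))
      + (∫ p : ℝ × ℝ,
        (Real.sqrt p.1 - Real.sqrt p.2)^2 / 2 * (k p.1 * k p.2) * (δ / (δ^2 + (p.2 - p.1)^2))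
        ∂((volume.restrict (Set.Ioi 0)).prod (volume.restrict (Set.Ioi 0)))) := by
  set μ0 := volume.restrict (Set.Ioi (0:ℝ)) with hμ0
  set P : ℝ → ℝ := fun t => δ / (δ^2 + t^2) with hP
  have hPm : Measurable P :=
    measurable_const.div (measurable_const.add (measurable_id.pow_const 2))
  set Φ : ℝ × ℝ → ℝ := fun p => p.1 * k p.1 * k p.2 * P (p.2 - p.1) with hΦdef
  set Φ' : ℝ × ℝ → ℝ := fun p => p.2 * (k p.1 * k p.2) * P (p.2 - p.1) with hΦ'def
  set A : ℝ × ℝ → ℝ := fun p =>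
    Real.sqrt p.1 * Real.sqrt p.2 * (k p.1 * k p.2) * P (p.2 - p.1) with hAdef
  set B : ℝ × ℝ → ℝ := fun p =>
    (Real.sqrt p.1 - Real.sqrt p.2)^2 / 2 * (k p.1 * k p.2) * P (p.2 - p.1) with hBdef
  have hΦint : Integrable Φ (μ0.prod μ0) := aux_Phi_int hmeas hint hδ
  have hPbd : ∀ t : ℝ, |P t| ≤ δ⁻¹ := by
    intro t
    rw [hP, _root_.abs_of_nonneg (by positivity)]
    rw [div_le_iff₀ (by positivity), inv_mul_eq_div, le_div_iff₀ hδ]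
    nlinarith [sq_nonneg t]
  have hΦ'int : Integrable Φ' (μ0.prod μ0) := by
    have hb : Integrable (fun p : ℝ × ℝ => |k p.1| * |p.2 * k p.2|) (μ0.prod μ0) :=
      (aux_k_int hmeas hint).abs.mul_prod (aux_yk_int hmeas hint).abs
    refine Integrable.mono' (hb.const_mul δ⁻¹) ?_ ?_
    · apply Measurable.aestronglyMeasurable
      exact ((measurable_snd.mul ((hmeas.comp measurable_fst).mul
        (hmeas.comp measurable_snd)))).mul (hPm.comp (measurable_snd.sub measurable_fst))
    · filter_upwards with p
      rw [Real.norm_eq_abs, abs_mul]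
      calc |p.2 * (k p.1 * k p.2)| * |P (p.2 - p.1)|
          ≤ |p.2 * (k p.1 * k p.2)| * δ⁻¹ :=
            mul_le_mul_of_nonneg_left (hPbd _) (abs_nonneg _)
        _ = δ⁻¹ * (|k p.1| * |p.2 * k p.2|) := by simp only [abs_mul]; ring
  have hAint : Integrable A (μ0.prod μ0) := by
    have hb : Integrable (fun p : ℝ × ℝ =>
        |Real.sqrt p.1 * k p.1| * |Real.sqrt p.2 * k p.2|) (μ0.prod μ0) :=
      (aux_sk_int hmeas hint).abs.mul_prod (aux_sk_int hmeas hint).abs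
    refine Integrable.mono' (hb.const_mul δ⁻¹) ?_ ?_
    · apply Measurable.aestronglyMeasurable
      exact (((Real.continuous_sqrt.measurable.comp measurable_fst).mul
        (Real.continuous_sqrt.measurable.comp measurable_snd)).mul
        ((hmeas.comp measurable_fst).mul (hmeas.comp measurable_snd))).mul
        (hPm.comp (measurable_snd.sub measurable_fst))
    · filter_upwards with p
      rw [Real.norm_eq_abs, abs_mul]
      calc |Real.sqrt p.1 * Real.sqrt p.2 * (k p.1 * k p.2)| * |P (p.2 - p.1)|
          ≤ |Real.sqrt p.1 * Real.sqrt p.2 * (k p.1 * k p.2)| * δ⁻¹ :=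
            mul_le_mul_of_nonneg_left (hPbd _) (abs_nonneg _)
        _ = δ⁻¹ * (|Real.sqrt p.1 * k p.1| * |Real.sqrt p.2 * k p.2|) := by
            simp only [abs_mul]; ring
  -- pointwise identity a.e.
  have hptw : (fun p => (Φ p + Φ' p) / 2) =ᵐ[μ0.prod μ0] (fun p => A p + B p) := by
    filter_upwards [aux_ae_mem] with p hp
    have hy : (0:ℝ) < p.1 := hp.1
    have hz : (0:ℝ) < p.2 := hp.2
    have e1 : Real.sqrt p.1 ^ 2 = p.1 := Real.sq_sqrt hy.le
    have e2 : Real.sqrt p.2 ^ 2 = p.2 := Real.sq_sqrt hz.le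
    show (p.1 * k p.1 * k p.2 * P (p.2 - p.1) + p.2 * (k p.1 * k p.2) * P (p.2 - p.1)) / 2
      = Real.sqrt p.1 * Real.sqrt p.2 * (k p.1 * k p.2) * P (p.2 - p.1)
        + (Real.sqrt p.1 - Real.sqrt p.2)^2 / 2 * (k p.1 * k p.2) * P (p.2 - p.1)
    linear_combination (-(k p.1 * k p.2 * P (p.2 - p.1)) / 2) * e1
      + (-(k p.1 * k p.2 * P (p.2 - p.1)) / 2) * e2
  have hBint : Integrable B (μ0.prod μ0) := by
    have h1 : Integrable (fun p => (Φ p + Φ' p) / 2) (μ0.prod μ0) :=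
      (hΦint.add hΦ'int).div_const 2
    have h2 : Integrable (fun p => A p + B p) (μ0.prod μ0) := h1.congr hptw
    have h3 : Integrable (fun p => (A p + B p) - A p) (μ0.prod μ0) := h2.sub hAint
    exact h3.congr (Filter.Eventually.of_forall (fun p => by ring))
  -- swap identity
  have hswapEq : (∫ p, Φ' p ∂(μ0.prod μ0)) = ∫ p, Φ p ∂(μ0.prod μ0) := by
    have h := integral_prod_swap (μ := μ0) (ν := μ0) Φ
    rw [← h]
    refine integral_congr_ae (Filter.Eventually.of_forall (fun p => ?_))
    show p.2 * (k p.1 * k p.2) * (δ / (δ^2 + (p.2 - p.1)^2))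
      = p.2 * k p.2 * k p.1 * (δ / (δ^2 + (p.1 - p.2)^2))
    rw [show (p.1 - p.2)^2 = (p.2 - p.1)^2 by ring]
    ring
  calc (∫ p, Φ p ∂(μ0.prod μ0))
      = ∫ p, (Φ p + Φ' p) / 2 ∂(μ0.prod μ0) := by
        rw [integral_div, integral_add hΦint hΦ'int, hswapEq]
        ring
    _ = ∫ p, (A p + B p) ∂(μ0.prod μ0) := integral_congr_ae hptw
    _ = (∫ p, A p ∂(μ0.prod μ0)) + ∫ p, B p ∂(μ0.prod μ0) := integral_add hAint hBint

lemma aux_B_tendsto (hmeas : Measurable k)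
    (hint : IntegrableOn (fun y => (1 + y) * |k y|) (Set.Ioi 0)) :
    Tendsto (fun δ : ℝ => ∫ p : ℝ × ℝ,
        (Real.sqrt p.1 - Real.sqrt p.2)^2 / 2 * (k p.1 * k p.2) * (δ / (δ^2 + (p.2 - p.1)^2))
        ∂((volume.restrict (Set.Ioi 0)).prod (volume.restrict (Set.Ioi 0))))
      (nhdsWithin 0 (Set.Ioi 0)) (nhds 0) := by
  set μ0 := volume.restrict (Set.Ioi (0:ℝ)) with hμ0
  have hbint : Integrable (fun p : ℝ × ℝ => 1/2 * (|k p.1| * |k p.2|)) (μ0.prod μ0) :=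
    (((aux_k_int hmeas hint).abs.mul_prod (aux_k_int hmeas hint).abs).const_mul (1/2))
  have hT := tendsto_integral_filter_of_dominated_convergence
    (μ := μ0.prod μ0) (l := nhdsWithin (0:ℝ) (Set.Ioi 0))
    (F := fun (δ : ℝ) (p : ℝ × ℝ) =>
      (Real.sqrt p.1 - Real.sqrt p.2)^2 / 2 * (k p.1 * k p.2) * (δ / (δ^2 + (p.2 - p.1)^2)))
    (f := fun _ : ℝ × ℝ => (0:ℝ))
    (bound := fun p : ℝ × ℝ => 1/2 * (|k p.1| * |k p.2|)) ?_ ?_ hbint ?_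
  · simpa using hT
  · filter_upwards with δ
    apply Measurable.aestronglyMeasurable
    exact ((((Real.continuous_sqrt.measurable.comp measurable_fst).sub
      (Real.continuous_sqrt.measurable.comp measurable_snd)).pow_const 2).div_const 2).mul
      ((hmeas.comp measurable_fst).mul (hmeas.comp measurable_snd)) |>.mul
      (measurable_const.div (measurable_const.add
        ((measurable_snd.sub measurable_fst).pow_const 2)))
  · filter_upwards [eventually_mem_nhdsWithin] with δ hδ
    filter_upwards [aux_ae_mem] with p hp
    have hy : (0:ℝ) < p.1 := hp.1
    have hz : (0:ℝ) < p.2 := hp.2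
    have hδ0 : (0:ℝ) < δ := hδ
    have e1 : Real.sqrt p.1 ^ 2 = p.1 := Real.sq_sqrt hy.le
    have e2 : Real.sqrt p.2 ^ 2 = p.2 := Real.sq_sqrt hz.le
    have hD : (0:ℝ) < δ^2 + (p.2 - p.1)^2 := by positivity
    have hs : (Real.sqrt p.1 - Real.sqrt p.2)^2 * (δ / (δ^2 + (p.2 - p.1)^2)) ≤ 1 := by
      rw [show (Real.sqrt p.1 - Real.sqrt p.2)^2 * (δ / (δ^2 + (p.2 - p.1)^2))
        = ((Real.sqrt p.1 - Real.sqrt p.2)^2 * δ) / (δ^2 + (p.2 - p.1)^2) by ring]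
      rw [div_le_one hD]
      nlinarith [sq_nonneg (δ - (Real.sqrt p.1 - Real.sqrt p.2)^2),
        mul_nonneg (mul_nonneg (Real.sqrt_nonneg p.1) (Real.sqrt_nonneg p.2))
          (sq_nonneg (Real.sqrt p.1 - Real.sqrt p.2)),
        mul_nonneg hδ0.le (sq_nonneg (Real.sqrt p.1 - Real.sqrt p.2))]
    have hq : (0:ℝ) ≤ δ / (δ^2 + (p.2 - p.1)^2) := by positivity
    have hsnn : (0:ℝ) ≤ (Real.sqrt p.1 - Real.sqrt p.2)^2 / 2 := by positivity
    rw [Real.norm_eq_abs, abs_mul, abs_mul, _root_.abs_of_nonneg hsnn,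
      _root_.abs_of_nonneg hq, abs_mul]
    nlinarith [mul_le_mul_of_nonneg_right hs
      (mul_nonneg (abs_nonneg (k p.1)) (abs_nonneg (k p.2)))]
  · filter_upwards [aux_ae_ne] with p hp
    have ht : (p.2 - p.1)^2 ≠ 0 := pow_ne_zero 2 (sub_ne_zero.mpr (Ne.symm hp))
    have hc : Tendsto (fun δ : ℝ => δ / (δ^2 + (p.2 - p.1)^2)) (nhds 0) (nhds 0) := by
      have hden : ((0:ℝ)^2 + (p.2 - p.1)^2) ≠ 0 := by simpa using ht
      have h2 := (continuousAt_id.div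
        ((continuousAt_id.pow 2).add continuousAt_const) hden).tendsto
      convert h2 using 2 <;> simp
    have h4 := (hc.const_mul ((Real.sqrt p.1 - Real.sqrt p.2)^2 / 2 * (k p.1 * k p.2))).mono_left
      (nhdsWithin_le_nhds : nhdsWithin (0:ℝ) (Set.Ioi 0) ≤ nhds 0)
    simpa [mul_comm, mul_assoc, mul_left_comm] using h4



theorem re_inner_inverse_J_abel (k : ℝ → ℝ) (hmeas : Measurable k)
    (hsupp : ∀ y < (0 : ℝ), k y = 0)
    (hint : IntegrableOn (fun y => (1 + y) * |k y|) (Set.Ioi 0))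
    (hint' : IntegrableOn (fun y => y * k y ^ 2) (Set.Ioi 0)) :
    Tendsto
      (fun δ : ℝ =>
        (∫ x in Set.Ioi (0 : ℝ),
          (Real.exp (-δ * x) : ℂ) *
            (starRingEnd ℂ (Complex.I * deriv (fhat k) x) * fhat k x)).re)
      (nhdsWithin 0 (Set.Ioi 0))
      (nhds (-Real.pi * ∫ y in Set.Ioi (0 : ℝ), y * k y ^ 2)) := by
  have hA := aux_A_tendsto hmeas hint hint'
  have hB := aux_B_tendsto hmeas hint
  have hneg := (hA.add hB).neg
  rw [show -(Real.pi * (∫ y in Set.Ioi (0:ℝ), y * k y ^ 2) + 0)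
    = -Real.pi * ∫ y in Set.Ioi (0:ℝ), y * k y ^ 2 by ring] at hneg
  refine Tendsto.congr' ?_ hneg
  filter_upwards [eventually_mem_nhdsWithin] with δ hδ
  rw [← aux_step2 hmeas hint hδ]
  exact (aux_step1 hmeas hint hδ).symm
end
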